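/- Let A, C ∈ ℂ^{n×n} be Hermitian and let λ_A be an eigenvalue of A of multiplicity k. Suppose λ̃_1, …, λ̃_k : ℝ → ℝ and x_1, …, x_k : ℝ → ℂ^n satisfy: (A − εC)x_j(ε) = λ̃_j(ε)x_j(ε) for all ε in a neighborhood of 0; each λ̃_j is differentiable at 0 with λ̃_j(0) = λ_A; each x_j is continuous at 0; and x_1(0), …, x_k(0) are orthonormal (hence an orthonormal basis of the eigenspace of λ_A for A). Let X_k = [x_1(0), …, x_k(0)]. Then there exist τ_1, …, τ_k, which are exactly the eigenvalues of X_k^H C X_k counting multiplicities, such that λ̃_j(ε) = λ_A − τ_j ε + o(ε) as ε → 0, for j = 1, …, k. -/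
import Mathlib


open Matrix

lemma charpoly_diagonal_fin {k : ℕ} (d : Fin k → ℂ) :
    (Matrix.diagonal d).charpoly =
      ∏ j : Fin k, (Polynomial.X - Polynomial.C (d j)) := by
  have h : charmatrix (Matrix.diagonal d) =
      Matrix.diagonal (fun j => (Polynomial.X : Polynomial ℂ) - Polynomial.C (d j)) := by
    ext i j
    by_cases hij : i = j
    · subst hij
      simp [Matrix.charmatrix_apply_eq]
    · simp [Matrix.charmatrix_apply_ne _ _ _ hij, Matrix.diagonal_apply_ne _ hij]
  rw [Matrix.charpoly, h, Matrix.det_diagonal]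

lemma continuous_dot_left {n : ℕ} (u : Fin n → ℂ) :
    Continuous fun v : Fin n → ℂ => u ⬝ᵥ v := by
  unfold dotProduct
  exact continuous_finset_sum _ fun i _ => continuous_const.mul (continuous_apply i)


/-- The eigenvalues of a Hermitian matrix, sorted in decreasing order:
index `0` is the largest, index `n-1` the smallest. -/
noncomputable def sortedEig {n : ℕ} {M : Matrix (Fin n) (Fin n) ℂ} (hM : M.IsHermitian) :
    Fin n → ℝ :=
  fun i => (hM.eigenvalues ∘ Tuple.sort hM.eigenvalues) i.rev

/-- The parameter matrix `H(μ) = A - μ C`. -/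
noncomputable def pencil {n : ℕ} (A C : Matrix (Fin n) (Fin n) ℂ) (μ : ℝ) :
    Matrix (Fin n) (Fin n) ℂ :=
  A - (μ : ℂ) • C

theorem pencil_isHermitian {n : ℕ} {A C : Matrix (Fin n) (Fin n) ℂ}
    (hA : A.IsHermitian) (hC : C.IsHermitian) (μ : ℝ) :
    (pencil A C μ).IsHermitian := by
  unfold pencil
  refine hA.sub ?_
  unfold Matrix.IsHermitian at *
  rw [Matrix.conjTranspose_smul, hC]
  simp

/-- `(μ, λ, x)` is a 2D-eigentriple of the pair `(A, C)`:
`(A - μC)x = λx`, `xᴴCx = 0` and `xᴴx = 1`. -/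
def Is2DEigentriple {n : ℕ} (A C : Matrix (Fin n) (Fin n) ℂ) (μ lam : ℝ)
    (x : Fin n → ℂ) : Prop :=
  (A - (μ : ℂ) • C) *ᵥ x = (lam : ℂ) • x ∧ star x ⬝ᵥ (C *ᵥ x) = 0 ∧ star x ⬝ᵥ x = 1

/-- `(μ, λ)` is a 2D-eigenvalue of the pair `(A, C)`. -/
def Is2DEigenvalue {n : ℕ} (A C : Matrix (Fin n) (Fin n) ℂ) (μ lam : ℝ) : Prop :=
  ∃ x : Fin n → ℂ, Is2DEigentriple A C μ lam x

/-- A Hermitian matrix is indefinite: it has a positive and a negative eigenvalue. -/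
def IsIndefinite {n : ℕ} {M : Matrix (Fin n) (Fin n) ℂ} (hM : M.IsHermitian) : Prop :=
  (∃ i, 0 < hM.eigenvalues i) ∧ (∃ j, hM.eigenvalues j < 0)

/-- Let `A, C` be Hermitian and `lam₀` an eigenvalue of `A` of
multiplicity `k`.  Given differentiable eigenvalue functions `lam j` and
continuous eigenvector functions `x j` of the pencil `A - εC` with
`lam j 0 = lam₀` and `x 1 0, …, x k 0` orthonormal, there exist
`τ 1, …, τ k`, which are exactly the eigenvalues of `X_kᴴ C X_k` counting
multiplicities (where `X_k = [x 1 0, …, x k 0]`), such that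
`lam j ε = lam₀ - τ j • ε + o(ε)` as `ε → 0` for every `j`. -/
theorem first_order_expansion_of_eigencurves
    {n k : ℕ} (A C : Matrix (Fin n) (Fin n) ℂ)
    (hA : A.IsHermitian) (hC : C.IsHermitian) (lam₀ : ℝ)
    (hmult : Module.finrank ℂ
      (Module.End.eigenspace (Matrix.mulVecLin A) (lam₀ : ℂ)) = k)
    (lam : Fin k → ℝ → ℝ) (x : Fin k → ℝ → (Fin n → ℂ))
    (heig : ∀ j : Fin k, ∀ᶠ ε : ℝ in nhds 0,
      (A - (ε : ℂ) • C) *ᵥ x j ε = (lam j ε : ℂ) • x j ε)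
    (hdiff : ∀ j : Fin k, DifferentiableAt ℝ (lam j) 0)
    (hval : ∀ j : Fin k, lam j 0 = lam₀)
    (hcont : ∀ j : Fin k, ContinuousAt (x j) 0)
    (horth : ∀ i j : Fin k, star (x i 0) ⬝ᵥ x j 0 = if i = j then 1 else 0) :
    ∃ τ : Fin k → ℝ,
      (Matrix.charpoly
          ((Matrix.of fun i j => x j 0 i)ᴴ * C * (Matrix.of fun i j => x j 0 i)) =
        ∏ j : Fin k, (Polynomial.X - Polynomial.C ((τ j : ℝ) : ℂ))) ∧
      ∀ j : Fin k, HasDerivAt (lam j) (-(τ j)) 0 := by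
  classical
  refine ⟨fun j => -(deriv (lam j) 0), ?_, fun j => ?_⟩
  swap
  · rw [neg_neg]
    exact (hdiff j).hasDerivAt
  -- eigenvector property at ε = 0
  have hx0 : ∀ j, A *ᵥ x j 0 = (lam₀ : ℂ) • x j 0 := by
    intro j
    have h := (heig j).self_of_nhds
    simpa [hval j] using h
  have hAleft : ∀ i : Fin k, ∀ v : Fin n → ℂ,
      star (x i 0) ⬝ᵥ (A *ᵥ v) = (lam₀ : ℂ) * (star (x i 0) ⬝ᵥ v) := by
    intro i v
    rw [Matrix.dotProduct_mulVec]
    have h1 : star (x i 0) ᵥ* A = (lam₀ : ℂ) • star (x i 0) := by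
      have h2 := congrArg star (hx0 i)
      rw [Matrix.star_mulVec, hA.eq] at h2
      rw [h2, star_smul]
      simp
    rw [h1, smul_dotProduct]
    simp
  -- key: entries of XᴴCX
  have hkey : ∀ i j : Fin k, star (x i 0) ⬝ᵥ (C *ᵥ x j 0) =
      if i = j then ((-(deriv (lam j) 0) : ℝ) : ℂ) else 0 := by
    intro i j
    set g : ℝ → ℂ := fun ε => star (x i 0) ⬝ᵥ x j ε with hgdef
    set h : ℝ → ℂ := fun ε => star (x i 0) ⬝ᵥ (C *ᵥ x j ε) with hhdef
    have hgcont : Filter.Tendsto g (nhds 0) (nhds (g 0)) :=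
      ((continuous_dot_left (star (x i 0))).continuousAt.comp (hcont j))
    have hhcont : Filter.Tendsto h (nhds 0) (nhds (h 0)) := by
      have heq : h = fun ε => (star (x i 0) ᵥ* C) ⬝ᵥ x j ε := by
        funext ε; rw [hhdef]; simp [Matrix.dotProduct_mulVec]
      rw [heq]
      exact ((continuous_dot_left (star (x i 0) ᵥ* C)).continuousAt.comp (hcont j))
    have hslope : Filter.Tendsto (fun ε : ℝ => (lam j ε - lam₀) / ε)
        (nhdsWithin 0 {(0:ℝ)}ᶜ) (nhds (deriv (lam j) 0)) := by
      have h0 := hasDerivAt_iff_tendsto_slope.mp (hdiff j).hasDerivAt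
      have heq : (slope (lam j) 0) = fun ε : ℝ => (lam j ε - lam₀) / ε := by
        funext ε
        simp [slope_def_field, hval j]
      rwa [heq] at h0
    set F : ℝ → ℂ := fun ε => (((lam j ε - lam₀) / ε : ℝ) : ℂ) * g ε with hF
    have h1 : Filter.Tendsto (fun ε : ℝ => (((lam j ε - lam₀) / ε : ℝ) : ℂ))
        (nhdsWithin 0 {(0:ℝ)}ᶜ) (nhds ((deriv (lam j) 0 : ℝ) : ℂ)) :=
      Complex.continuous_ofReal.continuousAt.tendsto.comp hslope
    have hFlim : Filter.Tendsto F (nhdsWithin 0 {(0:ℝ)}ᶜ)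
        (nhds (((deriv (lam j) 0 : ℝ) : ℂ) * g 0)) :=
      h1.mul (hgcont.mono_left nhdsWithin_le_nhds)
    have hFeq : ∀ᶠ ε in nhdsWithin 0 {(0:ℝ)}ᶜ, F ε = -h ε := by
      filter_upwards [(heig j).filter_mono nhdsWithin_le_nhds,
        self_mem_nhdsWithin] with ε heq' hε
      have hε0 : (ε : ℝ) ≠ 0 := hε
      have hεC : (ε : ℂ) ≠ 0 := by exact_mod_cast hε0
      have hdot := congrArg (fun v => star (x i 0) ⬝ᵥ v) heq'
      simp only [Matrix.sub_mulVec, Matrix.smul_mulVec,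
        dotProduct_sub, dotProduct_smul, smul_eq_mul] at hdot
      rw [hAleft i (x j ε)] at hdot
      have hmain : (((lam j ε : ℝ) : ℂ) - ((lam₀ : ℝ) : ℂ)) * g ε = -(ε : ℂ) * h ε := by
        rw [hgdef, hhdef]
        linear_combination -hdot
      rw [hF]
      push_cast
      rw [div_mul_eq_mul_div, div_eq_iff hεC]
      linear_combination hmain
    have hlim2 : Filter.Tendsto (fun ε => -h ε) (nhdsWithin 0 {(0:ℝ)}ᶜ)
        (nhds (-(h 0))) :=
      (hhcont.mono_left nhdsWithin_le_nhds).neg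
    have huniq : ((deriv (lam j) 0 : ℝ) : ℂ) * g 0 = -(h 0) :=
      tendsto_nhds_unique (hFlim.congr' hFeq) hlim2
    have hg0 : g 0 = if i = j then 1 else 0 := horth i j
    rw [hg0] at huniq
    by_cases hij : i = j
    · subst hij
      rw [if_pos rfl] at huniq ⊢
      rw [mul_one] at huniq
      have hh0 : star (x i 0) ⬝ᵥ (C *ᵥ x i 0) = h 0 := rfl
      rw [hh0]
      push_cast
      linear_combination huniq
    · rw [if_neg hij] at huniq ⊢
      rw [mul_zero] at huniq
      have hh0 : star (x i 0) ⬝ᵥ (C *ᵥ x j 0) = h 0 := rfl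
      rw [hh0]
      linear_combination huniq
  -- assemble the matrix identity
  have hB : (Matrix.of fun i j => x j 0 i)ᴴ * C * (Matrix.of fun i j => x j 0 i)
      = Matrix.diagonal (fun j => ((-(deriv (lam j) 0) : ℝ) : ℂ)) := by
    ext i j
    rw [Matrix.mul_assoc, Matrix.mul_apply]
    have hterm : ∀ l, ((Matrix.of fun i j => x j 0 i)ᴴ) i l *
        (C * Matrix.of fun i j => x j 0 i) l j
        = star (x i 0) l * (C *ᵥ x j 0) l := by
      intro l
      simp [Matrix.conjTranspose_apply, Matrix.mul_apply, Matrix.mulVec,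
        dotProduct]
    rw [Finset.sum_congr rfl fun l _ => hterm l]
    have hk := hkey i j
    rw [dotProduct] at hk
    rw [hk]
    by_cases hij : i = j
    · subst hij
      simp
    · simp [Matrix.diagonal_apply_ne _ hij, if_neg hij]
  rw [hB, charpoly_diagonal_fin]
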